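/- Let A be a commutative ring, 𝔭 a prime ideal of A, and f ∈ A an element with f ∉ 𝔭 and 𝔭 contained in the principal ideal (f). Let B be an A-algebra such that the image of f in B is a nonzerodivisor. Then the image of f in the quotient B/𝔭B (where 𝔭B denotes the ideal of B generated by the image of 𝔭) is a nonzerodivisor. -/

import Mathlib

/-- Let `𝔭` be a prime ideal of a commutative ring `A` and `f ∈ A` with `f ∉ 𝔭` and
`𝔭 ⊆ (f)`.  If the image of `f` in an `A`-algebra `B` is a nonzerodivisor, then the image
of `f` in `B ⧸ 𝔭B` is a nonzerodivisor. -/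
theorem nonZeroDivisor_quotient_of_mem_span
    {A B : Type*} [CommRing A] [CommRing B] [Algebra A B]
    (𝔭 : Ideal A) [𝔭.IsPrime] (f : A) (hf : f ∉ 𝔭) (h𝔭f : 𝔭 ≤ Ideal.span {f})
    (hB : algebraMap A B f ∈ nonZeroDivisors B) :
    Ideal.Quotient.mk (𝔭.map (algebraMap A B)) (algebraMap A B f) ∈
      nonZeroDivisors (B ⧸ 𝔭.map (algebraMap A B)) := by
  rw [mem_nonZeroDivisors_iff_right]
  intro x hx
  obtain ⟨b, rfl⟩ := Ideal.Quotient.mk_surjective x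
  rw [← map_mul] at hx
  rw [Ideal.Quotient.eq_zero_iff_mem] at hx ⊢
  have hP : 𝔭 ≤ Ideal.span {f} * 𝔭 := by
    intro p hp
    obtain ⟨a, rfl⟩ := Ideal.mem_span_singleton'.mp (h𝔭f hp)
    have ha : a ∈ 𝔭 :=
      ((Ideal.IsPrime.mem_or_mem ‹_› hp).resolve_right hf)
    rw [mul_comm a f]
    exact Ideal.mul_mem_mul (Ideal.mem_span_singleton_self f) ha
  have hle : Ideal.map (algebraMap A B) 𝔭 ≤
      Ideal.span {algebraMap A B f} * Ideal.map (algebraMap A B) 𝔭 := by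
    calc Ideal.map (algebraMap A B) 𝔭
        ≤ Ideal.map (algebraMap A B) (Ideal.span {f} * 𝔭) := Ideal.map_mono hP
      _ = Ideal.span {algebraMap A B f} * Ideal.map (algebraMap A B) 𝔭 := by
          rw [Ideal.map_mul, Ideal.map_span, Set.image_singleton]
  obtain ⟨y, hy, hyeq⟩ := Ideal.mem_span_singleton_mul.mp (hle hx)
  have : (b - y) * algebraMap A B f = 0 := by
    linear_combination -hyeq
  have hby : b - y = 0 := mem_nonZeroDivisors_iff_right.mp hB _ this
  rwa [sub_eq_zero.mp hby]
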